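/- If L/K is any finite extension of fields of characteristic p > 0, then [L^{1/p} : L] = [K^{1/p} : K] (in the sense that one is finite iff the other is, and then they are equal); in particular the p-degree of L equals the p-degree of K. -/
import Mathlib

open Cardinal

private lemma cardinal_mul_cancel {r x y : Cardinal} (h0 : r ≠ 0) (hf : r < ℵ₀)
    (h : r * x = r * y) : x = y := by
  rcases lt_or_ge x ℵ₀ with hx | hx
  · rcases lt_or_ge y ℵ₀ with hy | hy
    · lift r to ℕ using hf
      lift x to ℕ using hx
      lift y to ℕ using hy
      norm_cast at h h0 ⊢
      exact Nat.eq_of_mul_eq_mul_left (Nat.pos_of_ne_zero h0) h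
    · exact absurd (h ▸ mul_lt_aleph0 hf hx) <| not_lt.2 <| hy.trans (le_mul_left h0)
  · rcases lt_or_ge y ℵ₀ with hy | hy
    · exact absurd (h.symm ▸ mul_lt_aleph0 hf hy) <| not_lt.2 <| hx.trans (le_mul_left h0)
    · rw [mul_eq_right hx (hf.le.trans hx) h0, mul_eq_right hy (hf.le.trans hy) h0] at h
      exact h

/-- If `L/K` is any finite extension of fields of characteristic `p > 0`, then
`[L^{1/p} : L] = [K^{1/p} : K]` (as cardinals, so in particular one is finite
iff the other is, and then they are equal); in particular the p-degree of `L`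
equals the p-degree of `K`. Here `E^{1/p}` is the preimage of (the image of)
`E` under the Frobenius endomorphism of a fixed algebraic closure `Ω` of `L`. -/
theorem pDegree_eq_of_finite {p : ℕ} [Fact p.Prime]
    (K L Ω : Type*) [Field K] [Field L] [Field Ω] [CharP K p] [CharP Ω p]
    [Algebra K L] [Algebra L Ω] [Algebra K Ω] [IsScalarTower K L Ω]
    [IsAlgClosure L Ω] [FiniteDimensional K L] :
    Subfield.relrank (algebraMap L Ω).fieldRange
        (Subfield.comap (frobenius Ω p) (algebraMap L Ω).fieldRange) =
      Subfield.relrank (algebraMap K Ω).fieldRange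
        (Subfield.comap (frobenius Ω p) (algebraMap K Ω).fieldRange) := by
  haveI : IsAlgClosed Ω := IsAlgClosure.isAlgClosed L
  set f : L →+* Ω := algebraMap L Ω with hf
  set φ : Ω →+* Ω := frobenius Ω p with hφ
  set A : Subfield Ω := (algebraMap K Ω).fieldRange with hA
  set B : Subfield Ω := f.fieldRange with hB
  have hsurj : Function.Surjective φ := surjective_frobenius Ω p
  have hAB : A ≤ B := by
    rintro x ⟨k, rfl⟩
    exact ⟨algebraMap K L k, (IsScalarTower.algebraMap_apply K L Ω k).symm⟩
  have hAA' : A ≤ A.comap φ := fun x hx => by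
    simpa only [Subfield.mem_comap, hφ, frobenius_def] using pow_mem hx p
  have hBB' : B ≤ B.comap φ := fun x hx => by
    simpa only [Subfield.mem_comap, hφ, frobenius_def] using pow_mem hx p
  have hA'B' : A.comap φ ≤ B.comap φ := fun x hx => hAB hx
  have h1 := Subfield.relrank_mul_relrank hAB hBB'
  have h2 := Subfield.relrank_mul_relrank hAA' hA'B'
  have h3 : Subfield.relrank (A.comap φ) (B.comap φ) = Subfield.relrank A B :=
    Subfield.relrank_comap_comap_eq_relrank_of_surjective A B φ hsurj
  -- the factor `relrank A B` is finite:
  let N : IntermediateField K L :=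
    { A.comap f with
      algebraMap_mem' := fun x =>
        show f (algebraMap K L x) ∈ A from
          ⟨x, IsScalarTower.algebraMap_apply K L Ω x⟩ }
  haveI : FiniteDimensional ↥N L := FiniteDimensional.right K ↥N L
  have hrankN : Module.rank ↥(A.comap f) L < ℵ₀ := Module.rank_lt_aleph0 ↥N L
  have hlift := Subfield.lift_rank_comap A f
  have hfin : Subfield.relrank A B < ℵ₀ := by
    rw [← lift_lt_aleph0, ← hlift, lift_lt_aleph0]
    exact hrankN
  have hne : Subfield.relrank A B ≠ 0 := fun h => (rank_pos (R := ↥(A.comap f)) (M := L)).ne'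
    (by rwa [show A.relrank f.fieldRange = (0 : Cardinal) from h, lift_zero, lift_eq_zero] at hlift)
  refine cardinal_mul_cancel hne hfin ?_
  rw [h1, ← h2, h3, mul_comm]
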